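/- For every integer k > 0, if there exists some n ≥ 1 with b(n) − a(n) = k, then there exist infinitely many m ≥ 1 with b(m) − a(m) = k. -/

import Mathlib

open scoped Classical

/-- `a n` is the `n`-th positive integer `k` (1-indexed, in increasing order) such that
the fractional part `{k·√2}` is less than `1/2`. -/
noncomputable def a (n : ℕ) : ℕ :=
  Nat.nth (fun k => 0 < k ∧ Int.fract ((k : ℝ) * Real.sqrt 2) < 1 / 2) (n - 1)

/-- `b n` is the `n`-th positive integer `k` (1-indexed, in increasing order) such that
the fractional part `{k·√2}` is at least `1/2`. -/
noncomputable def b (n : ℕ) : ℕ :=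
  Nat.nth (fun k => 0 < k ∧ 1 / 2 ≤ Int.fract ((k : ℝ) * Real.sqrt 2)) (n - 1)


/-! ### Pell machinery -/

def pell : ℕ → ℕ × ℕ
  | 0 => (3, 2)
  | m + 1 => (3 * (pell m).1 + 4 * (pell m).2, 2 * (pell m).1 + 3 * (pell m).2)

lemma pell_eq (m : ℕ) : (pell m).1 ^ 2 = 2 * (pell m).2 ^ 2 + 1 := by
  induction m with
  | zero => rfl
  | succ m ih => simp only [pell]; ring_nf; ring_nf at ih; omega

lemma pell_y_even (m : ℕ) : 2 ∣ (pell m).2 := by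
  induction m with
  | zero => exact ⟨1, rfl⟩
  | succ m ih => simp only [pell]; omega

lemma pell_y_ge (m : ℕ) : m + 2 ≤ (pell m).2 := by
  induction m with
  | zero => exact le_refl 2
  | succ m ih =>
    have : 1 ≤ (pell m).1 := by
      have := pell_eq m; nlinarith [sq_nonneg (pell m).1]
    simp only [pell]; omega

lemma pell_coprime (m : ℕ) : Nat.Coprime (pell m).1 (pell m).2 := by
  have h := pell_eq m
  have h1 : Nat.gcd (pell m).1 (pell m).2 ∣ 1 := by
    have d1 : Nat.gcd (pell m).1 (pell m).2 ∣ (pell m).1 ^ 2 :=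
      Dvd.dvd.trans (Nat.gcd_dvd_left _ _) (dvd_pow_self _ two_ne_zero)
    have d2 : Nat.gcd (pell m).1 (pell m).2 ∣ 2 * (pell m).2 ^ 2 :=
      Dvd.dvd.trans (Nat.gcd_dvd_right _ _) (Dvd.dvd.mul_left (dvd_pow_self _ two_ne_zero) 2)
    have : Nat.gcd (pell m).1 (pell m).2 ∣ (pell m).1 ^ 2 - 2 * (pell m).2 ^ 2 :=
      Nat.dvd_sub d1 d2
    simpa [h] using this
  exact Nat.eq_one_of_dvd_one h1

/-! ### the defect `dd x y = x - y√2` -/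

noncomputable def dd (x y : ℕ) : ℝ := x - y * Real.sqrt 2

lemma sqrt2_sq : Real.sqrt 2 ^ 2 = 2 := Real.sq_sqrt (by norm_num)

lemma sqrt2_gt_one : 1 < Real.sqrt 2 := by
  nlinarith [sqrt2_sq, Real.sqrt_nonneg 2]

section V
variable {x y : ℕ} (hx : x ^ 2 = 2 * y ^ 2 + 1) (hy2 : 2 ≤ y)

include hx in
lemma dd_pos : 0 < dd x y := by
  have h2 : (0:ℝ) ≤ Real.sqrt 2 := Real.sqrt_nonneg 2
  have hxx : ((x:ℝ)) ^ 2 = 2 * (y:ℝ) ^ 2 + 1 := by exact_mod_cast congrArg (Nat.cast (R := ℝ)) hx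
  have hlt : ((y:ℝ) * Real.sqrt 2) ^ 2 < (x:ℝ) ^ 2 := by
    rw [mul_pow, sqrt2_sq]; nlinarith
  have := lt_of_pow_lt_pow_left₀ 2 (Nat.cast_nonneg x) hlt
  simpa [dd, sub_pos] using this

include hx in
lemma dd_mul : dd x y * ((x:ℝ) + y * Real.sqrt 2) = 1 := by
  have hxx : ((x:ℝ)) ^ 2 = 2 * (y:ℝ) ^ 2 + 1 := by exact_mod_cast congrArg (Nat.cast (R := ℝ)) hx
  have hs := sqrt2_sq
  simp only [dd]; nlinarith

include hx hy2 in
lemma dd_small : dd x y * (2 * y) < 1 := by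
  have h1 := dd_pos hx
  have h2 := dd_mul hx
  have hxy : (y:ℝ) < x := by
    have h : ((y:ℝ)) ^ 2 < ((x:ℝ)) ^ 2 := by
      have hxx : ((x:ℝ)) ^ 2 = 2 * (y:ℝ) ^ 2 + 1 := by
        exact_mod_cast congrArg (Nat.cast (R := ℝ)) hx
      nlinarith [sq_nonneg ((y:ℝ))]
    exact lt_of_pow_lt_pow_left₀ 2 (Nat.cast_nonneg x) h
  have hyr : (2:ℝ) * y < (x:ℝ) + y * Real.sqrt 2 := by
    have := sqrt2_gt_one
    have hy0 : (1:ℝ) ≤ (y:ℝ) := by exact_mod_cast Nat.one_le_of_lt hy2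
    nlinarith
  nlinarith

include hx hy2 in
lemma dd_le_half : dd x y ≤ 1/2 := by
  have := dd_small hx hy2
  have h1 := dd_pos hx
  have hy0 : (2:ℝ) ≤ (y:ℝ) := by exact_mod_cast hy2
  nlinarith

include hx hy2 in
lemma dd_y_lt : dd x y * y < 1/2 := by
  have := dd_small hx hy2
  nlinarith

lemma key_eq (hy0 : 0 < y) (j : ℕ) :
    (j:ℝ) * Real.sqrt 2 = ((j * x / y : ℕ) : ℝ) + (((j * x % y : ℕ) : ℝ) - (j:ℝ) * dd x y) / y := by
  have hyr : (0:ℝ) < (y:ℝ) := by exact_mod_cast hy0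
  have hdiv : (j * x : ℕ) = y * (j * x / y) + j * x % y := (Nat.div_add_mod _ _).symm
  have hcast : ((j:ℝ) * x) = (y:ℝ) * ((j * x / y : ℕ) : ℝ) + ((j * x % y : ℕ) : ℝ) := by
    exact_mod_cast congrArg (Nat.cast (R := ℝ)) hdiv
  have hdd : (j:ℝ) * dd x y = (j:ℝ) * x - (j:ℝ) * ((y:ℝ) * Real.sqrt 2) := by
    simp [dd]; ring
  field_simp
  nlinarith [hcast, hdd]

include hx hy2 in
lemma fract_formula {j : ℕ} (hj1 : 1 ≤ j) (hjy : j ≤ y) (hr : 1 ≤ j * x % y) :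
    Int.fract ((j:ℝ) * Real.sqrt 2) = (((j * x % y : ℕ) : ℝ) - (j:ℝ) * dd x y) / y := by
  have hy0 : 0 < y := by omega
  have hyr : (0:ℝ) < (y:ℝ) := by exact_mod_cast hy0
  rw [key_eq hy0 j, add_comm, Int.fract_add_natCast]
  apply Int.fract_eq_self.mpr
  have hdp := dd_pos hx
  have hdy := dd_y_lt hx hy2
  have hjr : (1:ℝ) ≤ (j:ℝ) := by exact_mod_cast hj1
  have hjyr : (j:ℝ) ≤ (y:ℝ) := by exact_mod_cast hjy
  have hjd : 0 < (j:ℝ) * dd x y := by positivity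
  have hjd2 : (j:ℝ) * dd x y < 1/2 := by nlinarith
  have hrr : (1:ℝ) ≤ ((j * x % y : ℕ) : ℝ) := by exact_mod_cast hr
  have hru : ((j * x % y : ℕ) : ℝ) ≤ (y:ℝ) - 1 := by
    have : j * x % y ≤ y - 1 := by
      have := Nat.mod_lt (j * x) hy0; omega
    calc ((j * x % y : ℕ) : ℝ) ≤ ((y - 1 : ℕ) : ℝ) := by exact_mod_cast this
      _ = (y:ℝ) - 1 := by
        have : (1:ℕ) ≤ y := by omega
        push_cast [this]; ring
  constructor
  · apply div_nonneg _ hyr.le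
    nlinarith
  · rw [div_lt_one hyr]
    nlinarith

include hx hy2 in
lemma fract_y : Int.fract ((y:ℝ) * Real.sqrt 2) = 1 - dd x y := by
  have hdp := dd_pos hx
  have hdh := dd_le_half hx hy2
  have hx1 : 1 ≤ x := by nlinarith [hx]
  have h1 : (y:ℝ) * Real.sqrt 2 = ((x - 1 : ℕ) : ℝ) + (1 - dd x y) := by
    have : ((x - 1 : ℕ) : ℝ) = (x:ℝ) - 1 := by push_cast [hx1]; ring
    rw [this]; simp only [dd]; ring
  rw [h1, add_comm, Int.fract_add_natCast]
  apply Int.fract_eq_self.mpr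
  constructor <;> linarith

include hx hy2 in
lemma fract_lt_half_iff (hco : Nat.Coprime x y) {j : ℕ} (hj1 : 1 ≤ j) (hjy : j ≤ y)
    (hye : 2 ∣ y) :
    Int.fract ((j:ℝ) * Real.sqrt 2) < 1/2 ↔ (1 ≤ j * x % y ∧ j * x % y ≤ y / 2) := by
  have hy0 : 0 < y := by omega
  have hyr : (0:ℝ) < (y:ℝ) := by exact_mod_cast hy0
  have hdp := dd_pos hx
  have hdy := dd_y_lt hx hy2
  have hdh := dd_le_half hx hy2
  have hy2r : ((y / 2 : ℕ) : ℝ) = (y:ℝ) / 2 := by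
    obtain ⟨t, rfl⟩ := hye
    push_cast [Nat.mul_div_cancel_left t (by norm_num : 0 < 2)]
    ring
  by_cases hr : 1 ≤ j * x % y
  · rw [fract_formula hx hy2 hj1 hjy hr]
    have hjr : (1:ℝ) ≤ (j:ℝ) := by exact_mod_cast hj1
    have hjyr : (j:ℝ) ≤ (y:ℝ) := by exact_mod_cast hjy
    have hjd : 0 < (j:ℝ) * dd x y := by positivity
    have hjd2 : (j:ℝ) * dd x y < 1/2 := by nlinarith
    rw [div_lt_iff₀ hyr]
    constructor
    · intro h
      refine ⟨hr, ?_⟩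
      by_contra hgt
      push_neg at hgt
      have : (y:ℝ)/2 + 1 ≤ ((j * x % y : ℕ) : ℝ) := by
        have h2 : y/2 + 1 ≤ j * x % y := hgt
        calc (y:ℝ)/2 + 1 = ((y/2 + 1 : ℕ) : ℝ) := by push_cast [hy2r]; ring
          _ ≤ _ := by exact_mod_cast h2
      nlinarith
    · rintro ⟨-, hle⟩
      have : ((j * x % y : ℕ) : ℝ) ≤ (y:ℝ)/2 := by rw [← hy2r]; exact_mod_cast hle
      nlinarith
  · have hr0 : j * x % y = 0 := by omega
    have hdvd : y ∣ j := by
      have h1 : y ∣ j * x := Nat.dvd_of_mod_eq_zero hr0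
      exact (Nat.Coprime.dvd_of_dvd_mul_right (Nat.Coprime.symm hco) h1)
    have hjy' : j = y := Nat.le_antisymm hjy (Nat.le_of_dvd (by omega) hdvd)
    subst hjy'
    rw [fract_y hx hy2]
    constructor
    · intro h; linarith
    · rintro ⟨h1, -⟩; omega

end V

lemma count_lemma {x y : ℕ} (hy2 : 2 ≤ y) (hco : Nat.Coprime x y) :
    (((Finset.Icc 1 y)).filter (fun j => 1 ≤ j * x % y ∧ j * x % y ≤ y / 2)).card = y / 2 := by
  obtain ⟨c, -, hc⟩ := Nat.exists_mul_mod_eq_one_of_coprime hco (by omega)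
  have hy0 : 0 < y := by omega
  have key : ∀ a : ℕ, (a * c % y) * x % y = a % y := by
    intro a
    have h1 : (a * c % y) * x % y = a * c * x % y := Nat.mod_mul_mod _ _ _
    have h2 : a * c * x % y = (a % y) * ((x * c) % y) % y := by
      rw [← Nat.mul_mod]; ring_nf
    rw [h1, h2, hc, mul_one, Nat.mod_mod]
  have key2 : ∀ a : ℕ, (a * x % y) * c % y = a % y := by
    intro a
    have h1 : (a * x % y) * c % y = a * x * c % y := Nat.mod_mul_mod _ _ _
    have h2 : a * x * c % y = (a % y) * ((x * c) % y) % y := by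
      rw [← Nat.mul_mod]; ring_nf
    rw [h1, h2, hc, mul_one, Nat.mod_mod]
  have hbij : (((Finset.Icc 1 y)).filter (fun j => 1 ≤ j * x % y ∧ j * x % y ≤ y / 2)).card
      = (Finset.Icc 1 (y / 2)).card := by
    apply Finset.card_bij' (fun j _ => j * x % y) (fun r _ => r * c % y)
    · -- hi
      intro j hj
      simp only [Finset.mem_filter] at hj
      simp only [Finset.mem_Icc]
      exact hj.2
    · -- hj
      intro r hr
      simp only [Finset.mem_Icc] at hr
      have hry : r % y = r := Nat.mod_eq_of_lt (by omega)
      have hcond : (r * c % y) * x % y = r := by rw [key r, hry]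
      have hne : 1 ≤ r * c % y := by
        rcases Nat.eq_zero_or_pos (r * c % y) with h0 | h1
        · exfalso; rw [h0] at hcond; simp at hcond; omega
        · exact h1
      simp only [Finset.mem_filter, Finset.mem_Icc]
      refine ⟨⟨hne, ?_⟩, ?_, ?_⟩
      · have := Nat.mod_lt (r * c) hy0; omega
      · rw [hcond]; omega
      · rw [hcond]; omega
    · -- left_inv
      intro j hj
      simp only [Finset.mem_filter, Finset.mem_Icc] at hj
      have hjlt : j < y := by
        rcases Nat.lt_or_ge j y with h | h
        · exact h
        · exfalso
          have hje : j = y := by omega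
          have h0 : j * x % y = 0 := by simp [hje, Nat.mul_mod_left]
          omega
      rw [key2 j, Nat.mod_eq_of_lt hjlt]
    · -- right_inv
      intro r hr
      simp only [Finset.mem_Icc] at hr
      rw [key r, Nat.mod_eq_of_lt (by omega)]
  rw [hbij, Nat.card_Icc]
  omega

/-- predicate for the `a` sequence -/
def Pp : ℕ → Prop := fun k => 0 < k ∧ Int.fract ((k : ℝ) * Real.sqrt 2) < 1 / 2
/-- predicate for the `b` sequence -/
def Qq : ℕ → Prop := fun k => 0 < k ∧ 1 / 2 ≤ Int.fract ((k : ℝ) * Real.sqrt 2)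

section C
variable {x y : ℕ} (hx : x ^ 2 = 2 * y ^ 2 + 1) (hy2 : 2 ≤ y) (hye : 2 ∣ y)
  (hco : Nat.Coprime x y)

include hx hy2 hye hco in
lemma count_P_y : Nat.count Pp y = y / 2 := by
  rw [Nat.count_eq_card_filter_range]
  rw [show (Finset.range y).filter Pp
      = (Finset.Icc 1 y).filter (fun j => 1 ≤ j * x % y ∧ j * x % y ≤ y / 2) from ?_]
  · exact count_lemma hy2 hco
  · ext j
    simp only [Finset.mem_filter, Finset.mem_range, Finset.mem_Icc, Pp]
    constructor
    · rintro ⟨hlt, h0, hf⟩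
      refine ⟨⟨h0, hlt.le⟩, ?_⟩
      exact (fract_lt_half_iff hx hy2 hco h0 hlt.le hye).mp hf
    · rintro ⟨⟨h1, hley⟩, hc⟩
      have hne : j ≠ y := by
        intro hje
        have h0 : j * x % y = 0 := by simp [hje, Nat.mul_mod_left]
        omega
      refine ⟨lt_of_le_of_ne hley hne, h1, ?_⟩
      exact (fract_lt_half_iff hx hy2 hco h1 hley hye).mpr hc

include hx hy2 hye hco in
lemma count_Q_y : Nat.count Qq y = y / 2 - 1 := by
  have key : ∀ n : ℕ, Nat.count Pp n + Nat.count Qq n + 1 = n ∨ n = 0 := by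
    intro n
    induction n with
    | zero => exact Or.inr rfl
    | succ n ih =>
      left
      rw [Nat.count_succ, Nat.count_succ]
      rcases Nat.eq_zero_or_pos n with h0 | h1
      · subst h0
        have hnp : ¬ Pp 0 := fun h => absurd h.1 (lt_irrefl 0)
        have hnq : ¬ Qq 0 := fun h => absurd h.1 (lt_irrefl 0)
        rw [if_neg hnp, if_neg hnq]
        simp [Nat.count_zero]
      · rcases lt_or_ge (Int.fract ((n:ℝ) * Real.sqrt 2)) (1/2) with hf | hf
        · have hp : Pp n := ⟨h1, hf⟩
          have hnq : ¬ Qq n := fun h => absurd h.2 (not_le.mpr hf)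
          rw [if_pos hp, if_neg hnq]
          omega
        · have hq : Qq n := ⟨h1, hf⟩
          have hnp : ¬ Pp n := fun h => absurd h.2 (not_lt.mpr hf)
          rw [if_neg hnp, if_pos hq]
          omega
  have hP := count_P_y hx hy2 hye hco
  rcases key y with h | h
  · omega
  · omega

include hx in
lemma fract_shift {j : ℕ} (h1 : dd x y < Int.fract ((j:ℝ) * Real.sqrt 2)) :
    Int.fract (((j + y : ℕ):ℝ) * Real.sqrt 2) = Int.fract ((j:ℝ) * Real.sqrt 2) - dd x y := by
  have hdp := dd_pos hx
  have hup := Int.fract_lt_one ((j:ℝ) * Real.sqrt 2)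
  have heq : ((j + y : ℕ):ℝ) * Real.sqrt 2
      = ((⌊(j:ℝ) * Real.sqrt 2⌋ : ℤ) : ℝ) + (Int.fract ((j:ℝ) * Real.sqrt 2) - dd x y) + x := by
    have hfr : ((j:ℝ) * Real.sqrt 2) = ((⌊(j:ℝ) * Real.sqrt 2⌋ : ℤ) : ℝ)
        + Int.fract ((j:ℝ) * Real.sqrt 2) := by
      rw [Int.fract]; ring
    push_cast
    simp only [dd]
    push_cast at hfr
    linarith [hfr]
  rw [heq, Int.fract_add_natCast, Int.fract_intCast_add]
  exact Int.fract_eq_self.mpr ⟨by linarith, by linarith⟩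

include hx hy2 hye hco in
lemma count_shift {L c : ℕ}
    (hsmall : ∀ j, 1 ≤ j → j ≤ L → dd x y < Int.fract ((j:ℝ) * Real.sqrt 2) ∧
      (1/2 ≤ Int.fract ((j:ℝ) * Real.sqrt 2) → 1/2 + dd x y ≤ Int.fract ((j:ℝ) * Real.sqrt 2)))
    (hc1 : 1 ≤ c) (hcL : c ≤ L) :
    Nat.count Pp (y + c) = y / 2 + Nat.count Pp c ∧
    Nat.count Qq (y + c) = y / 2 + Nat.count Qq c := by
  have hdp := dd_pos hx
  have hdh := dd_le_half hx hy2
  have hy0 : 0 < y := by omega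
  have hiff : ∀ i, 1 ≤ i → i ≤ L →
      ((Pp (y + i) ↔ Pp i) ∧ (Qq (y + i) ↔ Qq i)) := by
    intro i hi1 hiL
    obtain ⟨hs1, hs2⟩ := hsmall i hi1 hiL
    have hf := fract_shift hx hs1
    rw [show i + y = y + i from by omega] at hf
    have h0 : 0 < i := hi1
    constructor
    · unfold Pp
      rw [hf]
      constructor
      · rintro ⟨-, hlt⟩
        refine ⟨h0, ?_⟩
        by_contra hge
        push_neg at hge
        have := hs2 hge
        linarith
      · rintro ⟨-, hlt⟩
        exact ⟨by omega, by linarith⟩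
    · unfold Qq
      rw [hf]
      constructor
      · rintro ⟨-, hge⟩
        exact ⟨h0, by linarith⟩
      · rintro ⟨-, hge⟩
        have := hs2 hge
        exact ⟨by omega, by linarith⟩
  have hPy : ¬ Pp (y + 0) := by
    rw [Nat.add_zero]
    rintro ⟨-, hlt⟩
    rw [fract_y hx hy2] at hlt
    linarith
  have hQy : Qq (y + 0) := by
    rw [Nat.add_zero]
    refine ⟨hy0, ?_⟩
    rw [fract_y hx hy2]
    linarith
  constructor
  · rw [Nat.count_add, count_P_y hx hy2 hye hco]
    congr 1
    rw [Nat.count_eq_card_filter_range, Nat.count_eq_card_filter_range]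
    congr 1
    apply Finset.filter_congr
    intro i hi
    simp only [Finset.mem_range] at hi
    rcases Nat.eq_zero_or_pos i with h0 | h1
    · subst h0
      constructor
      · intro h; exact absurd h hPy
      · rintro ⟨h, -⟩; exact absurd h (lt_irrefl 0)
    · exact (hiff i h1 (by omega)).1
  · rw [Nat.count_add, count_Q_y hx hy2 hye hco]
    have hfi : (Finset.range c).filter (fun i => Qq (y + i))
        = insert 0 ((Finset.range c).filter Qq) := by
      ext i
      simp only [Finset.mem_insert, Finset.mem_filter, Finset.mem_range]
      rcases Nat.eq_zero_or_pos i with h0 | h1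
      · subst h0
        simp only [true_or, iff_true]
        exact ⟨by omega, hQy⟩
      · constructor
        · rintro ⟨hic, hq⟩
          exact Or.inr ⟨hic, ((hiff i h1 (by omega)).2).mp hq⟩
        · rintro (h0 | ⟨hic, hq⟩)
          · omega
          · exact ⟨hic, ((hiff i h1 (by omega)).2).mpr hq⟩
    have h0nm : 0 ∉ (Finset.range c).filter Qq := by
      simp only [Finset.mem_filter, Finset.mem_range, Qq]
      rintro ⟨-, h, -⟩
      exact absurd h (lt_irrefl 0)
    have : Nat.count (fun i => Qq (y + i)) c = Nat.count Qq c + 1 := by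
      rw [Nat.count_eq_card_filter_range, Nat.count_eq_card_filter_range, hfi,
        Finset.card_insert_of_notMem h0nm]
    rw [this]
    have hy4 : 2 ≤ y / 2 ∨ y / 2 = 1 := by omega
    omega
end C

-- new stuff
lemma pell_x_odd (m : ℕ) : (pell m).1 % 2 = 1 := by
  induction m with
  | zero => rfl
  | succ m ih => simp only [pell]; omega

lemma pell_y_lt (m : ℕ) : (pell m).2 < (pell (m+1)).2 := by
  have hx1 : 1 ≤ (pell m).1 := by
    have := pell_eq m; nlinarith [sq_nonneg (pell m).1]
  simp only [pell]; omega

lemma pell_y_mono : StrictMono (fun m => (pell m).2) :=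
  strictMono_nat_of_lt_succ pell_y_lt

lemma irr_mul {j : ℕ} (hj : j ≠ 0) : Irrational ((j:ℝ) * Real.sqrt 2) :=
  irrational_sqrt_two.natCast_mul hj

lemma fract_pos {j : ℕ} (hj : 1 ≤ j) : 0 < Int.fract ((j:ℝ) * Real.sqrt 2) := by
  rcases lt_or_eq_of_le (Int.fract_nonneg ((j:ℝ) * Real.sqrt 2)) with h | h
  · exact h
  · exfalso
    have hirr := irr_mul (by omega : j ≠ 0)
    apply hirr.ne_int ⌊(j:ℝ) * Real.sqrt 2⌋
    have := Int.fract ((j:ℝ) * Real.sqrt 2)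
    rw [Int.fract] at h
    linarith [h]

lemma fract_ne_half {j : ℕ} (hj : 1 ≤ j) : Int.fract ((j:ℝ) * Real.sqrt 2) ≠ 1/2 := by
  intro h
  have hirr := irr_mul (by omega : 2 * j ≠ 0)
  apply hirr.ne_int (2 * ⌊(j:ℝ) * Real.sqrt 2⌋ + 1)
  have hfr : (j:ℝ) * Real.sqrt 2 = (⌊(j:ℝ) * Real.sqrt 2⌋ : ℝ) + 1/2 := by
    rw [Int.fract] at h
    linarith
  push_cast
  linarith

lemma Pinf : {k | Pp k}.Infinite := by
  refine Set.infinite_of_injective_forall_mem (f := fun m => (pell m).2 / 2) ?_ ?_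
  · intro m m' hmm
    by_contra hne
    have hmm' : (pell m).2 / 2 = (pell m').2 / 2 := hmm
    rcases Nat.lt_or_ge m m' with h | h
    · have hlt2 : (pell m).2 < (pell m').2 := pell_y_mono h
      have h2 := pell_y_even m
      have h2' := pell_y_even m'
      omega
    · have hlt : m' < m := by omega
      have hlt2 : (pell m').2 < (pell m).2 := pell_y_mono hlt
      have h2 := pell_y_even m
      have h2' := pell_y_even m'
      omega
  · intro m
    show Pp ((pell m).2 / 2)
    have hx := pell_eq m
    have hy2 : 2 ≤ (pell m).2 := by have := pell_y_ge m; omega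
    have hye := pell_y_even m
    have hdp := dd_pos hx
    have hdh := dd_le_half hx hy2
    have hxo := pell_x_odd m
    set x := (pell m).1
    set y := (pell m).2
    refine ⟨by omega, ?_⟩
    have hcast : (((y/2 : ℕ)):ℝ) * Real.sqrt 2
        = (((x-1)/2 : ℕ) : ℝ) + (1 - dd x y)/2 := by
      have hy' : ((y/2 : ℕ):ℝ) = (y:ℝ)/2 := by
        obtain ⟨t, ht⟩ := hye
        rw [ht]
        push_cast [Nat.mul_div_cancel_left t (by norm_num : 0 < 2)]
        ring
      have hx' : (((x-1)/2 : ℕ) : ℝ) = ((x:ℝ)-1)/2 := by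
        have h1 : 1 ≤ x := by nlinarith [hx]
        have : (2:ℕ) ∣ (x - 1) := by omega
        obtain ⟨t, ht⟩ := this
        rw [ht]
        push_cast [Nat.mul_div_cancel_left t (by norm_num : 0 < 2)]
        have : (x:ℝ) = 2*t + 1 := by
          have : x = 2*t + 1 := by omega
          exact_mod_cast congrArg (Nat.cast (R := ℝ)) this
        rw [this]; ring
      rw [hy', hx']
      simp only [dd]
      ring
    rw [hcast, add_comm, Int.fract_add_natCast]
    rw [Int.fract_eq_self.mpr ⟨by linarith, by linarith⟩]
    linarith

lemma Qinf : {k | Qq k}.Infinite := by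
  refine Set.infinite_of_injective_forall_mem (f := fun m => (pell m).2) ?_ ?_
  · exact pell_y_mono.injective
  · intro m
    show Qq (pell m).2
    have hx := pell_eq m
    have hy2 : 2 ≤ (pell m).2 := by have := pell_y_ge m; omega
    have hdh := dd_le_half hx hy2
    refine ⟨by omega, ?_⟩
    rw [fract_y hx hy2]
    linarith

lemma exists_pell {ε : ℝ} (hε : 0 < ε) : ∃ m, dd (pell m).1 (pell m).2 < ε := by
  obtain ⟨N, hN⟩ := exists_nat_gt (1/ε)
  refine ⟨N, ?_⟩
  have hx := pell_eq N
  have hy2 : 2 ≤ (pell N).2 := by have := pell_y_ge N; omega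
  have hyN : (N:ℝ) + 2 ≤ ((pell N).2 : ℝ) := by exact_mod_cast pell_y_ge N
  have hsm := dd_small hx hy2
  have hdp := dd_pos hx
  have hNnn : (0:ℝ) ≤ N := Nat.cast_nonneg N
  have h1ε : 1/ε < ((pell N).2 : ℝ) := by linarith
  have hy0 : (0:ℝ) < ((pell N).2 : ℝ) := by linarith
  rw [div_lt_iff₀ hε] at h1ε
  nlinarith

lemma step {k : ℤ} (n : ℕ) (hn : 1 ≤ n) (hk : 0 < k) (heq : (b n : ℤ) - (a n : ℤ) = k) :
    ∃ m, n < m ∧ 1 ≤ m ∧ (b m : ℤ) - (a m : ℤ) = k := by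
  have haA : a n = Nat.nth Pp (n-1) := rfl
  have hbB : b n = Nat.nth Qq (n-1) := rfl
  set A := a n with hA
  set B := b n with hB
  have hPA : Pp A := by rw [haA]; exact Nat.nth_mem_of_infinite Pinf _
  have hQB : Qq B := by rw [hbB]; exact Nat.nth_mem_of_infinite Qinf _
  have hA1 : 1 ≤ A := hPA.1
  have hB1 : 1 ≤ B := hQB.1
  have hAB : A < B := by omega
  -- epsilon
  set g : ℕ → ℝ := fun j => if Int.fract ((j:ℝ) * Real.sqrt 2) < 1/2
    then Int.fract ((j:ℝ) * Real.sqrt 2) else Int.fract ((j:ℝ) * Real.sqrt 2) - 1/2 with hg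
  set F : Finset ℝ := (Finset.Icc 1 B).image g with hF
  have hFne : F.Nonempty := by
    apply Finset.image_nonempty.mpr
    exact ⟨1, Finset.mem_Icc.mpr ⟨le_refl 1, hB1⟩⟩
  set ε := F.min' hFne with hε
  have hεpos : 0 < ε := by
    rw [hε]
    apply (Finset.lt_min'_iff F hFne).mpr
    intro v hv
    rw [hF] at hv
    obtain ⟨j, hj, rfl⟩ := Finset.mem_image.mp hv
    rw [Finset.mem_Icc] at hj
    have hfp := fract_pos hj.1
    have hfh := fract_ne_half hj.1
    rw [hg]
    by_cases hflt : Int.fract ((j:ℝ) * Real.sqrt 2) < 1/2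
    · simp only [if_pos hflt]; exact hfp
    · simp only [if_neg hflt]
      push_neg at hflt
      rcases lt_or_eq_of_le hflt with h | h
      · linarith
      · exact absurd h.symm hfh
  obtain ⟨m₀, hdd⟩ := exists_pell hεpos
  have hx := pell_eq m₀
  have hy2 : 2 ≤ (pell m₀).2 := by have := pell_y_ge m₀; omega
  have hye := pell_y_even m₀
  have hco := pell_coprime m₀
  set x := (pell m₀).1
  set y := (pell m₀).2
  have hsmall : ∀ j, 1 ≤ j → j ≤ B → dd x y < Int.fract ((j:ℝ) * Real.sqrt 2) ∧
      (1/2 ≤ Int.fract ((j:ℝ) * Real.sqrt 2) →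
        1/2 + dd x y ≤ Int.fract ((j:ℝ) * Real.sqrt 2)) := by
    intro j hj1 hjL
    have hmem : g j ∈ F := by
      rw [hF]
      exact Finset.mem_image_of_mem _ (Finset.mem_Icc.mpr ⟨hj1, hjL⟩)
    have hle : ε ≤ g j := Finset.min'_le F _ hmem
    by_cases hflt : Int.fract ((j:ℝ) * Real.sqrt 2) < 1/2
    · rw [hg] at hle
      simp only [if_pos hflt] at hle
      exact ⟨lt_of_lt_of_le hdd hle, fun hge => absurd hflt (not_lt.mpr hge)⟩
    · rw [hg] at hle
      simp only [if_neg hflt] at hle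
      push_neg at hflt
      constructor
      · have hdp := dd_pos hx
        linarith
      · intro
        linarith
  -- counts
  have hcA : Nat.count Pp A = n - 1 := by
    rw [haA]; exact Nat.count_nth_of_infinite Pinf _
  have hcB : Nat.count Qq B = n - 1 := by
    rw [hbB]; exact Nat.count_nth_of_infinite Qinf _
  obtain ⟨hPcA, -⟩ := count_shift hx hy2 hye hco hsmall hA1 hAB.le
  obtain ⟨-, hQcB⟩ := count_shift hx hy2 hye hco hsmall hB1 (le_refl B)
  have hPAy : Pp (y + A) := by
    obtain ⟨hs1, -⟩ := hsmall A hA1 hAB.le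
    have hfs := fract_shift hx hs1
    rw [show A + y = y + A from by omega] at hfs
    refine ⟨by omega, ?_⟩
    rw [hfs]
    have hdp := dd_pos hx
    have := hPA.2
    linarith
  have hQBy : Qq (y + B) := by
    obtain ⟨hs1, hs2⟩ := hsmall B hB1 (le_refl B)
    have hfs := fract_shift hx hs1
    rw [show B + y = y + B from by omega] at hfs
    refine ⟨by omega, ?_⟩
    rw [hfs]
    have := hs2 hQB.2
    linarith
  have hnthA : Nat.nth Pp (y/2 + (n-1)) = y + A := by
    rw [← hcA, ← hPcA]
    exact Nat.nth_count hPAy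
  have hnthB : Nat.nth Qq (y/2 + (n-1)) = y + B := by
    rw [← hcB, ← hQcB]
    exact Nat.nth_count hQBy
  refine ⟨n + y/2, by omega, by omega, ?_⟩
  have ham : a (n + y/2) = y + A := by
    show Nat.nth Pp (n + y/2 - 1) = y + A
    rw [show n + y/2 - 1 = y/2 + (n-1) from by omega]
    exact hnthA
  have hbm : b (n + y/2) = y + B := by
    show Nat.nth Qq (n + y/2 - 1) = y + B
    rw [show n + y/2 - 1 = y/2 + (n-1) from by omega]
    exact hnthB
  rw [ham, hbm]
  push_cast
  omega

theorem stmt_16 (k : ℤ) (hk : 0 < k)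
    (hex : ∃ n : ℕ, 1 ≤ n ∧ (b n : ℤ) - (a n : ℤ) = k) :
    {m : ℕ | 1 ≤ m ∧ (b m : ℤ) - (a m : ℤ) = k}.Infinite := by
  obtain ⟨n₀, hn₀, he₀⟩ := hex
  have main : ∀ t : ℕ, ∃ m, t < m ∧ 1 ≤ m ∧ (b m : ℤ) - (a m : ℤ) = k := by
    intro t
    induction t with
    | zero =>
      obtain ⟨m, hm1, hm2, hm3⟩ := step n₀ hn₀ hk he₀
      exact ⟨m, by omega, hm2, hm3⟩
    | succ t ih =>
      obtain ⟨m, htm, hm1, hmk⟩ := ih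
      rcases Nat.lt_or_ge (t+1) m with h | h
      · exact ⟨m, h, hm1, hmk⟩
      · have hme : m = t + 1 := by omega
        subst hme
        exact step (t+1) hm1 hk hmk
  apply Set.infinite_of_forall_exists_gt
  intro t
  obtain ⟨m, h1, h2, h3⟩ := main t
  exact ⟨m, ⟨h2, h3⟩, h1⟩
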